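/- The map Δ := exp_q((a/(q − q⁻¹))ψ)·exp_{q⁻¹}(−(a⁻¹/(q − q⁻¹))ψ) is invertible with inverse Δ⁻¹ = exp_q((a⁻¹/(q − q⁻¹))ψ)·exp_{q⁻¹}(−(a/(q − q⁻¹))ψ); moreover, for 0 ≤ i ≤ d, ΔU_i ⊆ U_i^↓ and (Δ − I)U_i ⊆ U_0 + U_1 + ⋯ + U_{i−1}. -/

import Mathlib

noncomputable def qNum {𝕂 : Type*} [Field 𝕂] (q : 𝕂) (n : ℕ) : 𝕂 :=
  (q ^ n - q⁻¹ ^ n) / (q - q⁻¹)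

noncomputable def qFact {𝕂 : Type*} [Field 𝕂] (q : 𝕂) (n : ℕ) : 𝕂 :=
  ∏ j ∈ Finset.range n, qNum q (j + 1)

noncomputable def qExp {𝕂 : Type*} [Field 𝕂] {V : Type*} [AddCommGroup V] [Module 𝕂 V]
    (q : 𝕂) (N : ℕ) (T : Module.End 𝕂 V) : Module.End 𝕂 V :=
  ∑ n ∈ Finset.range N, (q ^ (n * (n - 1) / 2) / qFact q n) • T ^ n

noncomputable def qExpInv {𝕂 : Type*} [Field 𝕂] {V : Type*} [AddCommGroup V] [Module 𝕂 V]
    (q : 𝕂) (N : ℕ) (T : Module.End 𝕂 V) : Module.End 𝕂 V :=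
  ∑ n ∈ Finset.range N, (q⁻¹ ^ (n * (n - 1) / 2) / qFact q n) • T ^ n



namespace Stmt7Aux
open Polynomial
variable {𝕂 : Type*} [Field 𝕂]
noncomputable def eC (q c : 𝕂) (n : ℕ) : 𝕂 :=
  (q ^ (n * (n - 1) / 2) / qFact q n) * (c * (q - q⁻¹)⁻¹) ^ n
noncomputable def fC (q c : 𝕂) (n : ℕ) : 𝕂 :=
  (q⁻¹ ^ (n * (n - 1) / 2) / qFact q n) * (-(c * (q - q⁻¹)⁻¹)) ^ n
lemma qFact_succ (q : 𝕂) (m : ℕ) : qFact q (m + 1) = qFact q m * qNum q (m + 1) := by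
  rw [qFact, Finset.prod_range_succ, qFact]

lemma eRec (q c : 𝕂) (hq : q ≠ 0) (hqq : q - q⁻¹ ≠ 0) (m : ℕ)
    (hF : qFact q m ≠ 0) (hN : qNum q (m + 1) ≠ 0) :
    eC q c (m + 1) = q ^ (2 * (m + 1)) * eC q c (m + 1)
      - (c * q) * (q ^ (2 * m) * eC q c m) := by
  have hstep : eC q c (m + 1)
      = eC q c m * (q ^ m * (c * (q - q⁻¹)⁻¹) / qNum q (m + 1)) := by
    rw [eC, eC, Nat.triangle_succ, qFact_succ, pow_add, pow_succ]
    field_simp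
  have hr : (q ^ m * (c * (q - q⁻¹)⁻¹) / qNum q (m + 1)) * (1 - q ^ (2 * (m + 1)))
      = -((c * q) * q ^ (2 * m)) := by
    have hnum : q ^ (m + 1) - q⁻¹ ^ (m + 1) ≠ 0 := by
      intro h; apply hN; rw [qNum, h, zero_div]
    have hpow : q ^ (m + 1) * q⁻¹ ^ (m + 1) = 1 := by
      rw [← mul_pow, mul_inv_cancel₀ hq, one_pow]
    rw [div_mul_eq_mul_div, div_eq_iff hN, qNum, div_eq_mul_inv]
    linear_combination (-(c * (q - q⁻¹)⁻¹ * q ^ m)) * hpow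
  rw [hstep]
  linear_combination eC q c m * hr

lemma fRec (q c : 𝕂) (hq : q ≠ 0) (hqq : q - q⁻¹ ≠ 0) (m : ℕ)
    (hF : qFact q m ≠ 0) (hN : qNum q (m + 1) ≠ 0) :
    q ^ (2 * (m + 1)) * fC q c (m + 1) = fC q c (m + 1) - (c * q) * fC q c m := by
  have hstep : fC q c (m + 1)
      = fC q c m * (q⁻¹ ^ m * (-(c * (q - q⁻¹)⁻¹)) / qNum q (m + 1)) := by
    rw [fC, fC, Nat.triangle_succ, qFact_succ, pow_add, pow_succ]
    field_simp
  have hr : (q⁻¹ ^ m * (-(c * (q - q⁻¹)⁻¹)) / qNum q (m + 1)) * (q ^ (2 * (m + 1)) - 1)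
      = -(c * q) := by
    have hnum : q ^ (m + 1) - q⁻¹ ^ (m + 1) ≠ 0 := by
      intro h; apply hN; rw [qNum, h, zero_div]
    have hq21 : q ^ 2 - 1 ≠ 0 := by
      intro h
      apply hqq
      have : q - q⁻¹ = (q ^ 2 - 1) / q := by field_simp
      rw [this, h, zero_div]
    have hpm : q ^ m * q⁻¹ ^ m = 1 := by
      rw [← mul_pow, mul_inv_cancel₀ hq, one_pow]
    have hu : q * q⁻¹ = 1 := mul_inv_cancel₀ hq
    rw [div_mul_eq_mul_div, div_eq_iff hN, qNum, div_eq_mul_inv]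
    linear_combination (-(c * (q - q⁻¹)⁻¹ * q ^ (m + 2))) * hpm
      + (-(c * (q - q⁻¹)⁻¹ * q⁻¹ ^ m)) * hu
  rw [hstep]
  linear_combination fC q c m * hr

noncomputable def Pg (d : ℕ) (g : ℕ → 𝕂) : 𝕂[X] :=
  ∑ n ∈ Finset.range (d + 1), C (g n) * X ^ n
noncomputable def Sc (q : 𝕂) (p : 𝕂[X]) : 𝕂[X] := p.comp (C (q ^ 2) * X)

lemma eC_zero (q c : 𝕂) : eC q c 0 = 1 := by simp [eC, qFact]
lemma fC_zero (q c : 𝕂) : fC q c 0 = 1 := by simp [fC, qFact]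

lemma coeff_Pg (d : ℕ) (g : ℕ → 𝕂) (m : ℕ) :
    (Pg d g).coeff m = if m ≤ d then g m else 0 := by
  simp [Pg, finset_sum_coeff, coeff_C_mul, coeff_X_pow, Finset.sum_ite_eq, Nat.lt_succ_iff]

lemma Sc_Pg (d : ℕ) (q : 𝕂) (g : ℕ → 𝕂) :
    Sc q (Pg d g) = Pg d (fun n => q ^ (2 * n) * g n) := by
  rw [Sc, Pg, Pg, comp_eq_aeval, map_sum]
  refine Finset.sum_congr rfl fun n _ => ?_
  rw [map_mul, aeval_C, map_pow, aeval_X]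
  rw [mul_pow, ← C_pow, ← pow_mul]
  rw [algebraMap_eq, ← mul_assoc, ← C_mul, mul_comm (g n) (q ^ (2 * n))]

lemma Sc_mul (q : 𝕂) (p r : 𝕂[X]) : Sc q (p * r) = Sc q p * Sc q r := mul_comp p r _

lemma Sc_dvd (q : 𝕂) {N : ℕ} {p : 𝕂[X]} (h : X ^ N ∣ p) : X ^ N ∣ Sc q p := by
  obtain ⟨t, rfl⟩ := h
  refine ⟨C (q ^ 2) ^ N * Sc q t, ?_⟩
  rw [Sc, mul_comp, pow_comp, X_comp, Sc]
  ring

lemma cancel {N : ℕ} (b : 𝕂) (p : 𝕂[X]) (h : X ^ N ∣ (1 - C b * X) * p) : X ^ N ∣ p := by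
  rw [X_pow_dvd_iff] at h ⊢
  intro m hm
  induction m with
  | zero =>
    have h0 := h 0 hm
    simpa [sub_mul, mul_assoc, mul_coeff_zero] using h0
  | succ k ih =>
    have hk := h (k + 1) hm
    have hpk : p.coeff k = 0 := ih (lt_trans (Nat.lt_succ_self k) hm)
    rw [sub_mul, one_mul, coeff_sub, mul_assoc, coeff_C_mul, coeff_X_mul, hpk,
      mul_zero, sub_zero] at hk
    exact hk

lemma trunc (d : ℕ) (p : 𝕂[X]) : X ^ (d + 1) ∣ (p - Pg d fun n => p.coeff n) := by
  rw [X_pow_dvd_iff]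
  intro m hm
  rw [coeff_sub, coeff_Pg, if_pos (Nat.lt_succ_iff.mp hm), sub_self]

lemma R_E (d : ℕ) (q c : 𝕂)
    (hrec : ∀ m, m + 1 ≤ d → eC q c (m + 1) = q ^ (2 * (m + 1)) * eC q c (m + 1)
      - (c * q) * (q ^ (2 * m) * eC q c m)) :
    X ^ (d + 1) ∣ (Pg d (eC q c)
      - (1 - C (c * q) * X) * Pg d (fun n => q ^ (2 * n) * eC q c n)) := by
  rw [X_pow_dvd_iff]
  intro m hm
  rw [coeff_sub, sub_mul, one_mul, coeff_sub, coeff_Pg, coeff_Pg, mul_assoc, coeff_C_mul]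
  have hmd : m ≤ d := Nat.lt_succ_iff.mp hm
  rw [if_pos hmd, if_pos hmd]
  match m with
  | 0 => simp [coeff_X_mul_zero]
  | (k+1) =>
    rw [coeff_X_mul, coeff_Pg, if_pos (le_trans (Nat.le_succ k) hmd)]
    have := hrec k hmd
    linear_combination this

lemma R_F (d : ℕ) (q c : 𝕂)
    (hrec : ∀ m, m + 1 ≤ d → q ^ (2 * (m + 1)) * fC q c (m + 1)
      = fC q c (m + 1) - (c * q) * fC q c m) :
    X ^ (d + 1) ∣ (Pg d (fun n => q ^ (2 * n) * fC q c n)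
      - (1 - C (c * q) * X) * Pg d (fC q c)) := by
  rw [X_pow_dvd_iff]
  intro m hm
  rw [coeff_sub, sub_mul, one_mul, coeff_sub, coeff_Pg, coeff_Pg, mul_assoc, coeff_C_mul]
  have hmd : m ≤ d := Nat.lt_succ_iff.mp hm
  rw [if_pos hmd, if_pos hmd]
  match m with
  | 0 => simp
  | (k+1) =>
    rw [coeff_X_mul, coeff_Pg, if_pos (le_trans (Nat.le_succ k) hmd)]
    have := hrec k hmd
    linear_combination this

lemma mainOne (d : ℕ) (q c : 𝕂)
    (hq2 : ∀ n, 1 ≤ n → n ≤ d → q ^ (2 * n) ≠ 1)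
    (hE : X ^ (d + 1) ∣ (Pg d (eC q c)
      - (1 - C (c * q) * X) * Pg d (fun n => q ^ (2 * n) * eC q c n)))
    (hF : X ^ (d + 1) ∣ (Pg d (fun n => q ^ (2 * n) * fC q c n)
      - (1 - C (c * q) * X) * Pg d (fC q c))) :
    X ^ (d + 1) ∣ (Pg d (eC q c) * Pg d (fC q c) - 1) := by
  set E : 𝕂[X] := Pg d (eC q c) with hEdef
  set F : 𝕂[X] := Pg d (fC q c) with hFdef
  set SE : 𝕂[X] := Pg d (fun n => q ^ (2 * n) * eC q c n) with hSEdef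
  set SF : 𝕂[X] := Pg d (fun n => q ^ (2 * n) * fC q c n) with hSFdef
  obtain ⟨t1, ht1⟩ := hE
  obtain ⟨t2, ht2⟩ := hF
  have h3 : X ^ (d + 1) ∣ (1 - C (c * q) * X) * (SE * SF - E * F) :=
    ⟨-(t1 * SF) + E * t2, by linear_combination (-SF) * ht1 + E * ht2⟩
  have h4 : X ^ (d + 1) ∣ (SE * SF - E * F) := cancel _ _ h3
  -- relate to coefficients of G := E * F
  have hSG : Sc q (E * F) = SE * SF := by
    rw [Sc_mul, hEdef, hFdef, Sc_Pg, Sc_Pg]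
  have hT := trunc d (E * F)
  have hT2 : X ^ (d + 1) ∣ (Sc q (E * F) - Pg d (fun n => q ^ (2 * n) * (E * F).coeff n)) := by
    have := Sc_dvd q hT
    rw [Sc, sub_comp, ← Sc, ← Sc, Sc_Pg] at this
    exact this
  have h5 : X ^ (d + 1) ∣ (Pg d (fun n => q ^ (2 * n) * (E * F).coeff n)
      - Pg d (fun n => (E * F).coeff n)) := by
    have step : Pg d (fun n => q ^ (2 * n) * (E * F).coeff n) - Pg d (fun n => (E * F).coeff n)
        = -(Sc q (E * F) - Pg d (fun n => q ^ (2 * n) * (E * F).coeff n))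
          + (SE * SF - E * F) + (E * F - Pg d (fun n => (E * F).coeff n)) := by
      rw [hSG]; ring
    rw [step]
    exact dvd_add (dvd_add (Dvd.dvd.neg_right hT2) h4) hT
  have hco : ∀ m, m ≤ d → q ^ (2 * m) * (E * F).coeff m = (E * F).coeff m := by
    intro m hm
    have := (X_pow_dvd_iff.mp h5) m (Nat.lt_succ_of_le hm)
    rw [coeff_sub, coeff_Pg, coeff_Pg, if_pos hm, if_pos hm, sub_eq_zero] at this
    exact this
  have hg : ∀ m, 1 ≤ m → m ≤ d → (E * F).coeff m = 0 := by
    intro m h1 h2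
    by_contra hne
    exact hq2 m h1 h2 (mul_right_cancel₀ hne (by rw [hco m h2, one_mul]))
  have hg0 : (E * F).coeff 0 = 1 := by
    rw [mul_coeff_zero, hEdef, hFdef, coeff_Pg, coeff_Pg, if_pos (Nat.zero_le d),
      if_pos (Nat.zero_le d), eC_zero, fC_zero, one_mul]
  have hPg1 : Pg d (fun n => (E * F).coeff n) = 1 := by
    rw [Pg, Finset.sum_eq_single 0]
    · rw [hg0]; simp
    · intro n hn hne
      rw [hg n (Nat.one_le_iff_ne_zero.mpr hne) (Nat.lt_succ_iff.mp (Finset.mem_range.mp hn))]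
      simp
    · intro h; exact absurd (Finset.mem_range.mpr (Nat.succ_pos d)) h
  have final : E * F - 1 = (E * F - Pg d (fun n => (E * F).coeff n)) := by rw [hPg1]
  rw [final]
  exact hT

lemma mainTwine (d : ℕ) (q a : 𝕂)
    (hE : X ^ (d + 1) ∣ (Pg d (eC q a)
      - (1 - C (a * q) * X) * Pg d (fun n => q ^ (2 * n) * eC q a n)))
    (hF : X ^ (d + 1) ∣ (Pg d (fun n => q ^ (2 * n) * fC q a⁻¹ n)
      - (1 - C (a⁻¹ * q) * X) * Pg d (fC q a⁻¹))) :
    X ^ (d + 1) ∣ ((1 - C (a⁻¹ * q) * X) * (Pg d (eC q a) * Pg d (fC q a⁻¹))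
      - (1 - C (a * q) * X) * Sc q (Pg d (eC q a) * Pg d (fC q a⁻¹))) := by
  obtain ⟨t1, ht1⟩ := hE
  obtain ⟨t2, ht2⟩ := hF
  rw [Sc_mul, Sc_Pg, Sc_Pg]
  exact ⟨t1 * Pg d (fun n => q ^ (2 * n) * fC q a⁻¹ n) - Pg d (eC q a) * t2,
    by linear_combination (Pg d (fun n => q ^ (2 * n) * fC q a⁻¹ n)) * ht1
      - (Pg d (eC q a)) * ht2⟩

variable {V : Type*} [AddCommGroup V] [Module 𝕂 V]

lemma aev_Pg (ψ : Module.End 𝕂 V) (d : ℕ) (g : ℕ → 𝕂) :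
    (aeval ψ) (Pg d g) = ∑ n ∈ Finset.range (d + 1), g n • ψ ^ n := by
  rw [Pg, map_sum]
  refine Finset.sum_congr rfl fun n _ => ?_
  rw [map_mul, aeval_C, map_pow, aeval_X, Algebra.smul_def]

lemma aev_kill (ψ : Module.End 𝕂 V) (d : ℕ) (hnil : ψ ^ (d + 1) = 0)
    {p : 𝕂[X]} (h : X ^ (d + 1) ∣ p) : aeval ψ p = 0 := by
  obtain ⟨t, rfl⟩ := h
  rw [map_mul, map_pow, aeval_X, hnil, zero_mul]

lemma aev_congr (ψ : Module.End 𝕂 V) (d : ℕ) (hnil : ψ ^ (d + 1) = 0)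
    {p r : 𝕂[X]} (h : X ^ (d + 1) ∣ (p - r)) : aeval ψ p = aeval ψ r := by
  have := aev_kill ψ d hnil h
  rw [map_sub, sub_eq_zero] at this
  exact this

lemma Kpow (K ψ : Module.End 𝕂 V) (q : 𝕂) (hKψ : K * ψ = q ^ 2 • (ψ * K)) :
    ∀ n : ℕ, K * ψ ^ n = (q ^ (2 * n)) • (ψ ^ n * K) := by
  intro n
  induction n with
  | zero => simp
  | succ k ih =>
    rw [pow_succ, ← mul_assoc, ih, smul_mul_assoc, mul_assoc, hKψ, mul_smul_comm,
      smul_smul, ← mul_assoc, ← pow_succ,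
      show 2 * (k + 1) = 2 * k + 2 by ring]
    congr 1
    ring

lemma Kcomm (K ψ : Module.End 𝕂 V) (q : 𝕂) (hKψ : K * ψ = q ^ 2 • (ψ * K)) (p : 𝕂[X]) :
    K * aeval ψ p = aeval ψ (Sc q p) * K := by
  induction p using Polynomial.induction_on with
  | C x =>
    rw [Sc, C_comp, aeval_C]
    exact (Algebra.commutes x K).symm
  | add p r hp hr =>
    have hadd : Sc q (p + r) = Sc q p + Sc q r := add_comp
    rw [map_add, mul_add, hp, hr, hadd, map_add, add_mul]
  | monomial n x _ =>
    have hS : Sc q (C x * X ^ (n + 1)) = C (x * q ^ (2 * (n + 1))) * X ^ (n + 1) := by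
      simp only [Sc, mul_comp, C_comp, pow_comp, X_comp]
      rw [mul_pow, ← map_pow, ← pow_mul, ← mul_assoc, ← map_mul]
    rw [hS, map_mul, aeval_C, map_pow, aeval_X, map_mul, aeval_C, map_pow, aeval_X,
      ← Algebra.smul_def, ← Algebra.smul_def, mul_smul_comm, Kpow K ψ q hKψ, smul_smul,
      smul_mul_assoc]


lemma apply_eigen (Bop : Module.End 𝕂 V) (c : 𝕂) (y : V) (hy : Bop y = c • y) (p : 𝕂[X]) :
    (aeval Bop p) y = (eval c p) • y := by
  have hpow : ∀ k : ℕ, (Bop ^ k) y = c ^ k • y := by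
    intro k
    induction k with
    | zero => simp
    | succ m ih =>
      rw [pow_succ, Module.End.mul_apply, hy, map_smul, ih, smul_smul, pow_succ]
      rw [mul_comm]
  rw [aeval_eq_sum_range, eval_eq_sum_range, Finset.sum_smul]
  rw [LinearMap.sum_apply]
  refine Finset.sum_congr rfl fun n _ => ?_
  rw [LinearMap.smul_apply, hpow, smul_smul]

lemma eigen_mem (d : ℕ) (Bop : Module.End 𝕂 V) (Ud : ℕ → Submodule 𝕂 V)
    (hint : DirectSum.IsInternal (fun i : Fin (d + 1) => Ud i.1))
    (μ : ℕ → 𝕂)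
    (hBU : ∀ j, j ≤ d → ∀ v ∈ Ud j, Bop v = μ j • v)
    (i : ℕ) (hi : i ≤ d) (hdist : ∀ j, j ≤ d → j ≠ i → μ j ≠ μ i)
    (x : V) (hx : Bop x = μ i • x) : x ∈ Ud i := by
  classical
  set Pp : 𝕂[X] := ∏ k ∈ (Finset.range (d + 1)).erase i,
      (C (μ i - μ k)⁻¹ * (X - C (μ k))) with hPp
  have hev : ∀ c : 𝕂, eval c Pp = ∏ k ∈ (Finset.range (d + 1)).erase i,
      ((μ i - μ k)⁻¹ * (c - μ k)) := by
    intro c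
    rw [hPp, eval_prod]
    exact Finset.prod_congr rfl fun k _ => by rw [eval_mul, eval_C, eval_sub, eval_X, eval_C]
  have hx' : (aeval Bop Pp) x = x := by
    rw [apply_eigen Bop (μ i) x hx, hev]
    rw [Finset.prod_congr rfl fun k hk => ?_, Finset.prod_const_one, one_smul]
    have hkd : k ≤ d := Nat.lt_succ_iff.mp (Finset.mem_range.mp (Finset.mem_of_mem_erase hk))
    have hki : k ≠ i := Finset.ne_of_mem_erase hk
    exact inv_mul_cancel₀ (sub_ne_zero.mpr (Ne.symm (hdist k hkd hki)))
  have himg : ∀ y : V, (aeval Bop Pp) y ∈ Ud i := by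
    intro y
    have hy' : y ∈ ⨆ j : Fin (d + 1), Ud j.1 := by
      rw [hint.submodule_iSup_eq_top]; trivial
    refine Submodule.iSup_induction (motive := fun z => (aeval Bop Pp) z ∈ Ud i) _ hy' ?_ (by simp) ?_
    · intro j z hz
      rw [apply_eigen Bop (μ j.1) z (hBU j.1 (Nat.lt_succ_iff.mp j.2) z hz), hev]
      by_cases hji : (j : ℕ) = i
      · exact Submodule.smul_mem _ _ (hji ▸ hz)
      · have hjmem : (j : ℕ) ∈ (Finset.range (d + 1)).erase i :=
          Finset.mem_erase.mpr ⟨hji, Finset.mem_range.mpr j.2⟩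
        rw [Finset.prod_eq_zero hjmem (by simp), zero_smul]
        exact Submodule.zero_mem _
    · intro y z hy hz
      rw [map_add]
      exact Submodule.add_mem _ hy hz
  exact hx' ▸ himg x

end Stmt7Aux

open Stmt7Aux Polynomial in
set_option maxHeartbeats 1000000 in
theorem stmt_7
    {𝕂 : Type*} [Field 𝕂] {V : Type*} [AddCommGroup V] [Module 𝕂 V]
    [FiniteDimensional 𝕂 V]
    (d : ℕ) (hd : 1 ≤ d) (q a : 𝕂) (hq : q ≠ 0) (ha : a ≠ 0)
    (hq2 : ∀ i : ℕ, 1 ≤ i → i ≤ d → q ^ (2 * i) ≠ 1)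
    (ha2 : ∀ i : ℤ, 1 - (d : ℤ) ≤ i → i ≤ (d : ℤ) - 1 → a ^ 2 ≠ q ^ (2 * i))
    (K : Module.End 𝕂 V) (hK : IsUnit K)
    (U : ℕ → Submodule 𝕂 V)
    (hUne : ∀ i, i ≤ d → U i ≠ ⊥)
    (hUint : DirectSum.IsInternal (fun i : Fin (d + 1) => U i.1))
    (hKU : ∀ i, i ≤ d → ∀ v ∈ U i, K v = (q ^ ((d : ℤ) - 2 * (i : ℤ))) • v)
    (ψ : Module.End 𝕂 V)
    (hψ0 : ∀ v ∈ U 0, ψ v = 0)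
    (hψU : ∀ i, 1 ≤ i → i ≤ d → ∀ v ∈ U i, ψ v ∈ U (i - 1))
    (hψnil : ψ ^ (d + 1) = 0)
    (hKψ : K * ψ = q ^ 2 • (ψ * K))
    (hinv : ∀ x : 𝕂, IsUnit (1 - x • ψ))
    (B : Module.End 𝕂 V)
    (hB : B = (1 - (a * q) • ψ) * Ring.inverse (1 - (a⁻¹ * q) • ψ) * K)
    (M : Module.End 𝕂 V)
    (hM : M = (a - a⁻¹)⁻¹ • (a • K - a⁻¹ • B))
    (hMunit : IsUnit M)
    (Ud : ℕ → Submodule 𝕂 V)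
    (hUdne : ∀ i, i ≤ d → Ud i ≠ ⊥)
    (hUdint : DirectSum.IsInternal (fun i : Fin (d + 1) => Ud i.1))
    (hBUd : ∀ i, i ≤ d → ∀ v ∈ Ud i, B v = (q ^ ((d : ℤ) - 2 * (i : ℤ))) • v)
    (hψ0d : ∀ v ∈ Ud 0, ψ v = 0)
    (hψUd : ∀ i, 1 ≤ i → i ≤ d → ∀ v ∈ Ud i, ψ v ∈ Ud (i - 1)):
    qExp q (d + 1) ((a / (q - q⁻¹)) • ψ) * qExpInv q (d + 1) (-((a⁻¹ / (q - q⁻¹)) • ψ)) *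
      (qExp q (d + 1) ((a⁻¹ / (q - q⁻¹)) • ψ) * qExpInv q (d + 1) (-((a / (q - q⁻¹)) • ψ))) = 1 ∧
    qExp q (d + 1) ((a⁻¹ / (q - q⁻¹)) • ψ) * qExpInv q (d + 1) (-((a / (q - q⁻¹)) • ψ)) *
      (qExp q (d + 1) ((a / (q - q⁻¹)) • ψ) * qExpInv q (d + 1) (-((a⁻¹ / (q - q⁻¹)) • ψ))) = 1 ∧
    ∀ i, i ≤ d →
      Submodule.map
        (qExp q (d + 1) ((a / (q - q⁻¹)) • ψ) * qExpInv q (d + 1) (-((a⁻¹ / (q - q⁻¹)) • ψ)))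
        (U i) ≤ Ud i ∧
      Submodule.map
        (qExp q (d + 1) ((a / (q - q⁻¹)) • ψ) * qExpInv q (d + 1) (-((a⁻¹ / (q - q⁻¹)) • ψ)) - 1)
        (U i) ≤ ∑ j ∈ Finset.range i, U j := by
  classical
  -- scalar nonvanishing facts
  have hq21 : q - q⁻¹ ≠ 0 := by
    intro h
    apply hq2 1 le_rfl hd
    have hqq' : q = q⁻¹ := by
      have := sub_eq_zero.mp h; exact this
    rw [show (2 * 1 : ℕ) = 2 by norm_num, pow_two]
    nth_rewrite 2 [hqq']
    exact mul_inv_cancel₀ hq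
  have hNum : ∀ m, 1 ≤ m → m ≤ d → qNum q m ≠ 0 := by
    intro m h1 h2 h
    rw [qNum, _root_.div_eq_zero_iff] at h
    rcases h with h | h
    · apply hq2 m h1 h2
      have hqm : q ^ m = q⁻¹ ^ m := sub_eq_zero.mp h
      rw [two_mul, pow_add]
      nth_rewrite 2 [hqm]
      rw [inv_pow, mul_inv_cancel₀ (pow_ne_zero m hq)]
    · exact hq21 h
  have hFact : ∀ m, m ≤ d → qFact q m ≠ 0 := by
    intro m hm
    rw [qFact]
    refine Finset.prod_ne_zero_iff.mpr fun j hj => ?_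
    exact hNum (j + 1) (Nat.succ_le_succ (Nat.zero_le j))
      (le_trans (Nat.succ_le_of_lt (Finset.mem_range.mp hj)) hm)
  have hErec : ∀ c : 𝕂, ∀ m, m + 1 ≤ d → eC q c (m + 1) = q ^ (2 * (m + 1)) * eC q c (m + 1)
      - (c * q) * (q ^ (2 * m) * eC q c m) := fun c m hm =>
    eRec q c hq hq21 m (hFact m (by omega)) (hNum (m + 1) (by omega) hm)
  have hFrec : ∀ c : 𝕂, ∀ m, m + 1 ≤ d → q ^ (2 * (m + 1)) * fC q c (m + 1)
      = fC q c (m + 1) - (c * q) * fC q c m := fun c m hm =>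
    fRec q c hq hq21 m (hFact m (by omega)) (hNum (m + 1) (by omega) hm)
  have hREa := R_E d q a (hErec a)
  have hREai := R_E d q a⁻¹ (hErec a⁻¹)
  have hRFa := R_F d q a (hFrec a)
  have hRFai := R_F d q a⁻¹ (hFrec a⁻¹)
  have hOne_a := mainOne d q a hq2 hREa hRFa
  have hOne_ai := mainOne d q a⁻¹ hq2 hREai hRFai
  have hTw := mainTwine d q a hREa hRFai
  -- operator identifications
  have hqe : ∀ c : 𝕂, qExp q (d + 1) ((c / (q - q⁻¹)) • ψ) = Polynomial.aeval ψ (Pg d (eC q c)) := by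
    intro c
    rw [aev_Pg, qExp]
    refine Finset.sum_congr rfl fun n _ => ?_
    rw [eC, _root_.smul_pow, smul_smul, div_eq_mul_inv c]
  have hqei : ∀ c : 𝕂, qExpInv q (d + 1) (-((c / (q - q⁻¹)) • ψ))
      = Polynomial.aeval ψ (Pg d (fC q c)) := by
    intro c
    rw [aev_Pg, qExpInv]
    refine Finset.sum_congr rfl fun n _ => ?_
    rw [fC, div_eq_mul_inv c, ← neg_smul, _root_.smul_pow, smul_smul]
  have hΔeq : qExp q (d + 1) ((a / (q - q⁻¹)) • ψ) * qExpInv q (d + 1) (-((a⁻¹ / (q - q⁻¹)) • ψ))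
      = Polynomial.aeval ψ (Pg d (eC q a) * Pg d (fC q a⁻¹)) := by
    rw [hqe a, hqei a⁻¹, map_mul]
  have hΔ'eq : qExp q (d + 1) ((a⁻¹ / (q - q⁻¹)) • ψ) * qExpInv q (d + 1) (-((a / (q - q⁻¹)) • ψ))
      = Polynomial.aeval ψ (Pg d (eC q a⁻¹) * Pg d (fC q a)) := by
    rw [hqe a⁻¹, hqei a, map_mul]
  have hprod1 : X ^ (d + 1) ∣ (Pg d (eC q a) * Pg d (fC q a⁻¹)
      * (Pg d (eC q a⁻¹) * Pg d (fC q a)) - 1) := by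
    have hsplit : Pg d (eC q a) * Pg d (fC q a⁻¹) * (Pg d (eC q a⁻¹) * Pg d (fC q a)) - 1
        = (Pg d (eC q a) * Pg d (fC q a) - 1) * (Pg d (eC q a⁻¹) * Pg d (fC q a⁻¹))
          + (Pg d (eC q a⁻¹) * Pg d (fC q a⁻¹) - 1) := by ring
    rw [hsplit]
    exact dvd_add (Dvd.dvd.mul_right hOne_a _) hOne_ai
  have hprod2 : X ^ (d + 1) ∣ (Pg d (eC q a⁻¹) * Pg d (fC q a)
      * (Pg d (eC q a) * Pg d (fC q a⁻¹)) - 1) := by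
    have hsplit : Pg d (eC q a⁻¹) * Pg d (fC q a) * (Pg d (eC q a) * Pg d (fC q a⁻¹)) - 1
        = (Pg d (eC q a) * Pg d (fC q a) - 1) * (Pg d (eC q a⁻¹) * Pg d (fC q a⁻¹))
          + (Pg d (eC q a⁻¹) * Pg d (fC q a⁻¹) - 1) := by ring
    rw [hsplit]
    exact dvd_add (Dvd.dvd.mul_right hOne_a _) hOne_ai
  refine ⟨?_, ?_, ?_⟩
  · rw [hΔeq, hΔ'eq, ← map_mul, aev_congr ψ d hψnil hprod1, map_one]
  · rw [hΔeq, hΔ'eq, ← map_mul, aev_congr ψ d hψnil hprod2, map_one]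
  -- Part 3
  have hμinj : ∀ i j : ℕ, i ≤ d → j ≤ d → i ≠ j →
      (q ^ ((d : ℤ) - 2 * (i : ℤ))) ≠ q ^ ((d : ℤ) - 2 * (j : ℤ)) := by
    intro i j hi hj hij heq
    have h2 : q ^ (2 * (j : ℤ)) = q ^ (2 * (i : ℤ)) := by
      have h3 := congrArg (fun z => z * q ^ (2 * (i : ℤ) + 2 * (j : ℤ) - (d : ℤ))) heq
      simp only [← zpow_add₀ hq] at h3
      have e1 : (d : ℤ) - 2 * (i : ℤ) + (2 * (i : ℤ) + 2 * (j : ℤ) - (d : ℤ)) = 2 * (j : ℤ) := by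
        ring
      have e2 : (d : ℤ) - 2 * (j : ℤ) + (2 * (i : ℤ) + 2 * (j : ℤ) - (d : ℤ)) = 2 * (i : ℤ) := by
        ring
      rw [e1, e2] at h3
      exact h3
    rcases Nat.lt_or_ge i j with hlt | hge
    · apply hq2 (j - i) (by omega) (by omega)
      have : ((2 * (j - i) : ℕ) : ℤ) = 2 * (j : ℤ) - 2 * (i : ℤ) := by push_cast; omega
      rw [← zpow_natCast q (2 * (j - i)), this, zpow_sub₀ hq, h2,
        div_self (zpow_ne_zero _ hq)]
    · have hlt : j < i := by omega
      apply hq2 (i - j) (by omega) (by omega)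
      have : ((2 * (i - j) : ℕ) : ℤ) = 2 * (i : ℤ) - 2 * (j : ℤ) := by push_cast; omega
      rw [← zpow_natCast q (2 * (i - j)), this, zpow_sub₀ hq, h2,
        div_self (zpow_ne_zero _ hq)]
  -- intertwining relation
  set Gm : Polynomial 𝕂 := Pg d (eC q a) * Pg d (fC q a⁻¹) with hGmdef
  set Δ : Module.End 𝕂 V := Polynomial.aeval ψ Gm with hΔdef
  have hA1 : (1 : Module.End 𝕂 V) - (a * q) • ψ = Polynomial.aeval ψ (1 - C (a * q) * X) := by
    rw [map_sub, map_one, map_mul, aeval_C, aeval_X, Algebra.smul_def]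
  have hA2 : (1 : Module.End 𝕂 V) - (a⁻¹ * q) • ψ
      = Polynomial.aeval ψ (1 - C (a⁻¹ * q) * X) := by
    rw [map_sub, map_one, map_mul, aeval_C, aeval_X, Algebra.smul_def]
  have hcommW : ∀ p : Polynomial 𝕂, Ring.inverse ((1 : Module.End 𝕂 V) - (a⁻¹ * q) • ψ)
      * Polynomial.aeval ψ p
      = Polynomial.aeval ψ p * Ring.inverse ((1 : Module.End 𝕂 V) - (a⁻¹ * q) • ψ) := by
    intro p
    obtain ⟨u, hu⟩ := hinv (a⁻¹ * q)
    have hc : Commute ((1 : Module.End 𝕂 V) - (a⁻¹ * q) • ψ) (Polynomial.aeval ψ p) := by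
      rw [hA2]
      show _ * _ = _ * _
      rw [← map_mul, ← map_mul, mul_comm]
    rw [← hu] at hc ⊢
    rw [Ring.inverse_unit]
    exact hc.units_inv_left.eq
  have hID : B * Δ = Δ * K := by
    rw [hB]
    set W : Module.End 𝕂 V := Ring.inverse ((1 : Module.End 𝕂 V) - (a⁻¹ * q) • ψ) with hW
    have f1 : K * Δ = Polynomial.aeval ψ (Sc q Gm) * K := Kcomm K ψ q hKψ Gm
    have f4 : ((1 : Module.End 𝕂 V) - (a * q) • ψ) * Polynomial.aeval ψ (Sc q Gm)
        = ((1 : Module.End 𝕂 V) - (a⁻¹ * q) • ψ) * Δ := by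
      rw [hA1, hA2, hΔdef, ← map_mul, ← map_mul]
      exact (aev_congr ψ d hψnil hTw).symm
    have f5 : ((1 : Module.End 𝕂 V) - (a⁻¹ * q) • ψ) * W = 1 :=
      Ring.mul_inverse_cancel _ (hinv (a⁻¹ * q))
    calc ((1 : Module.End 𝕂 V) - (a * q) • ψ) * W * K * Δ
        = ((1 : Module.End 𝕂 V) - (a * q) • ψ) * (W * (K * Δ)) := by
          rw [mul_assoc, mul_assoc]
      _ = ((1 : Module.End 𝕂 V) - (a * q) • ψ) * (W * (Polynomial.aeval ψ (Sc q Gm) * K)) := by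
          rw [f1]
      _ = ((1 : Module.End 𝕂 V) - (a * q) • ψ) * ((W * Polynomial.aeval ψ (Sc q Gm)) * K) := by
          rw [mul_assoc]
      _ = ((1 : Module.End 𝕂 V) - (a * q) • ψ) * ((Polynomial.aeval ψ (Sc q Gm) * W) * K) := by
          rw [hcommW]
      _ = (((1 : Module.End 𝕂 V) - (a * q) • ψ) * Polynomial.aeval ψ (Sc q Gm)) * (W * K) := by
          rw [mul_assoc, mul_assoc]
      _ = (((1 : Module.End 𝕂 V) - (a⁻¹ * q) • ψ) * Δ) * (W * K) := by rw [f4]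
      _ = ((1 : Module.End 𝕂 V) - (a⁻¹ * q) • ψ) * ((Δ * W) * K) := by
          rw [mul_assoc, mul_assoc]
      _ = ((1 : Module.End 𝕂 V) - (a⁻¹ * q) • ψ) * ((W * Δ) * K) := by
          rw [hΔdef, hcommW]
      _ = (((1 : Module.End 𝕂 V) - (a⁻¹ * q) • ψ) * W) * (Δ * K) := by
          rw [mul_assoc, mul_assoc]
      _ = Δ * K := by rw [f5, one_mul]
  -- ψ-power lemma
  have hPL : ∀ i : ℕ, i ≤ d → ∀ v ∈ U i, ∀ n : ℕ,
      (ψ ^ n) v ∈ U (i - n) ∧ (i < n → (ψ ^ n) v = 0) := by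
    intro i hi v hv n
    induction n with
    | zero => exact ⟨by simpa using hv, fun h => absurd h (by omega)⟩
    | succ m ih =>
      obtain ⟨h1, h2⟩ := ih
      have hstep : (ψ ^ (m + 1)) v = ψ ((ψ ^ m) v) := by
        rw [pow_succ', Module.End.mul_apply]
      by_cases hc : i ≤ m
      · have hz : (ψ ^ (m + 1)) v = 0 := by
          rcases lt_or_eq_of_le hc with hlt | heq
          · rw [hstep, h2 hlt, map_zero]
          · rw [hstep]
            apply hψ0
            have hsub : i - m = 0 := by omega
            rw [hsub] at h1
            exact h1
        exact ⟨by rw [hz]; exact Submodule.zero_mem _, fun _ => hz⟩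
      · push_neg at hc
        have hmem := hψU (i - m) (by omega) (by omega) _ h1
        rw [← hstep] at hmem
        have hsub : i - m - 1 = i - (m + 1) := by omega
        rw [hsub] at hmem
        exact ⟨hmem, fun h => absurd h (by omega)⟩
  have hco0 : Gm.coeff 0 = 1 := by
    rw [hGmdef, mul_coeff_zero, coeff_Pg, coeff_Pg, if_pos (Nat.zero_le d),
      if_pos (Nat.zero_le d), eC_zero, fC_zero, one_mul]
  intro i hi
  constructor
  · -- Δ (U i) ≤ Ud i
    rw [hΔeq]
    rintro w ⟨v, hv, rfl⟩
    have hBv : B ((Polynomial.aeval ψ Gm) v)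
        = (q ^ ((d : ℤ) - 2 * (i : ℤ))) • ((Polynomial.aeval ψ Gm) v) := by
      calc B ((Polynomial.aeval ψ Gm) v) = (B * Δ) v := rfl
        _ = (Δ * K) v := by rw [hID]
        _ = Δ (K v) := rfl
        _ = Δ ((q ^ ((d : ℤ) - 2 * (i : ℤ))) • v) := by rw [hKU i hi v hv]
        _ = (q ^ ((d : ℤ) - 2 * (i : ℤ))) • ((Polynomial.aeval ψ Gm) v) := by
            rw [map_smul, hΔdef]
    exact eigen_mem d B Ud hUdint (fun j => q ^ ((d : ℤ) - 2 * (j : ℤ))) hBUd i hi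
      (fun j hj hji => hμinj j i hj hi hji) _ hBv
  · -- (Δ - 1) (U i) ≤ ∑
    rw [hΔeq]
    rintro w ⟨v, hv, rfl⟩
    have hs : (Polynomial.aeval ψ Gm) v
        = ∑ n ∈ Finset.range (Gm.natDegree + 1), Gm.coeff n • (ψ ^ n) v := by
      rw [Polynomial.aeval_eq_sum_range, LinearMap.sum_apply]
      exact Finset.sum_congr rfl fun n _ => by rw [LinearMap.smul_apply]
    have hΔv : (Polynomial.aeval ψ Gm - 1) v
        = ∑ n ∈ Finset.Ico 1 (Gm.natDegree + 1), Gm.coeff n • (ψ ^ n) v := by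
      rw [LinearMap.sub_apply, Module.End.one_apply, hs, Finset.range_eq_Ico,
        Finset.sum_eq_sum_Ico_succ_bot (Nat.succ_pos _), hco0, pow_zero, one_smul,
        Module.End.one_apply, add_sub_cancel_left]
    rw [hΔv]
    refine Submodule.sum_mem _ fun n hn => Submodule.smul_mem _ _ ?_
    have hn1 : 1 ≤ n := (Finset.mem_Ico.mp hn).1
    obtain ⟨hm1, hm2⟩ := hPL i hi v hv n
    by_cases hci : i < n
    · rw [hm2 hci]
      exact Submodule.zero_mem _
    · push_neg at hci
      have hlt : i - n < i := by omega
      exact Finset.single_le_sum (f := U) (fun j _ => zero_le)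
        (Finset.mem_range.mpr hlt) hm1
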